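/- Let n ≥ 3 be odd. The set of integer pairs (e, h) with h ≥ 1 satisfying |-(n-1) - e/2| ≤ h (the signature bound region W₄) but lying in neither W₁ = {(e,h) : |-n - e/2| + 1 ≤ h} nor W₃ = {(e,h) : |1 - e/2| + n ≤ h}, and satisfying e ≡ 2h (mod 4), is exactly the set {(2h - 2(n-1), h) : 1 ≤ h ≤ n-1}, i.e., exactly n-1 points all lying on the line h = e/2 + (n-1). -/
import Mathlib


/-- For T(2,n), n ≥ 3 odd: the unknown region U = (W₁ ∪ W₃)ᶜ ∩ W₄ (with
Massey's congruence) is exactly the n-1 points (2h - 2(n-1), h), 1 ≤ h ≤ n-1,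
on the line h = e/2 + (n-1). -/
theorem stmt8 (n : ℤ) (hn : 3 ≤ n) (hodd : Odd n) :
    {p : ℤ × ℤ | 1 ≤ p.2 ∧
        |(-((n : ℚ) - 1)) - (p.1 : ℚ) / 2| ≤ (p.2 : ℚ) ∧
        ¬ (|(-(n : ℚ)) - (p.1 : ℚ) / 2| + 1 ≤ (p.2 : ℚ)) ∧
        ¬ (|(1 : ℚ) - (p.1 : ℚ) / 2| + (n : ℚ) ≤ (p.2 : ℚ)) ∧
        (p.1 - 2 * p.2) % 4 = 0} =
      {p : ℤ × ℤ | ∃ h : ℤ, 1 ≤ h ∧ h ≤ n - 1 ∧ p = (2 * h - 2 * (n - 1), h)} := by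
  obtain ⟨k, hk⟩ := hodd
  ext ⟨e, h⟩
  simp only [Set.mem_setOf_eq, Prod.mk.injEq]
  constructor
  · rintro ⟨h1, h2, h3, h4, h5⟩
    rw [abs_le] at h2
    rw [not_le] at h3 h4
    have h3' := lt_abs.mp (by linarith : (h : ℚ) - 1 < |(-(n : ℚ)) - (e : ℚ) / 2|)
    have h4' := lt_abs.mp (by linarith : (h : ℚ) - n < |(1 : ℚ) - (e : ℚ) / 2|)
    have i1 : (-(2*h) : ℤ) ≤ -2*(n-1) - e := by
      have : ((-(2*h) : ℤ) : ℚ) ≤ ((-2*(n-1) - e : ℤ) : ℚ) := by push_cast; linarith [h2.1]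
      exact_mod_cast this
    have i2 : (-2*(n-1) - e : ℤ) ≤ 2*h := by
      have : ((-2*(n-1) - e : ℤ) : ℚ) ≤ ((2*h : ℤ) : ℚ) := by push_cast; linarith [h2.2]
      exact_mod_cast this
    have i3 : (2*h - 2 : ℤ) < -2*n - e ∨ (2*h - 2 : ℤ) < 2*n + e := by
      rcases h3' with hc | hc
      · left
        have : ((2*h - 2 : ℤ) : ℚ) < ((-2*n - e : ℤ) : ℚ) := by push_cast; linarith
        exact_mod_cast this
      · right
        have : ((2*h - 2 : ℤ) : ℚ) < ((2*n + e : ℤ) : ℚ) := by push_cast; linarith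
        exact_mod_cast this
    have i4 : (2*h - 2*n : ℤ) < 2 - e ∨ (2*h - 2*n : ℤ) < e - 2 := by
      rcases h4' with hc | hc
      · left
        have : ((2*h - 2*n : ℤ) : ℚ) < ((2 - e : ℤ) : ℚ) := by push_cast; linarith
        exact_mod_cast this
      · right
        have : ((2*h - 2*n : ℤ) : ℚ) < ((e - 2 : ℤ) : ℚ) := by push_cast; linarith
        exact_mod_cast this
    exact ⟨h, h1, by omega, by omega, by omega⟩
  · rintro ⟨m, hm1, hm2, he, hh⟩
    subst hh
    subst he
    refine ⟨hm1, ?_, ?_, ?_, by omega⟩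
    · have : (-((n : ℚ) - 1)) - ((2*h - 2*(n-1) : ℤ) : ℚ) / 2 = -(h : ℚ) := by
        push_cast; ring
      rw [this, abs_neg, abs_of_nonneg (by exact_mod_cast (by omega : (0:ℤ) ≤ h))]
    · rw [not_le]
      have : (-(n : ℚ)) - ((2*h - 2*(n-1) : ℤ) : ℚ) / 2 = -((h : ℚ) + 1) := by
        push_cast; ring
      rw [this, abs_neg, abs_of_nonneg (by exact_mod_cast (by omega : (0:ℤ) ≤ h + 1))]
      have : (h : ℚ) < h + 1 + 1 := by linarith
      linarith
    · rw [not_le]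
      have : (1 : ℚ) - ((2*h - 2*(n-1) : ℤ) : ℚ) / 2 = (n : ℚ) - h := by
        push_cast; ring
      rw [this, abs_of_nonneg (by exact_mod_cast (by omega : (0:ℤ) ≤ n - h))]
      have : (h : ℚ) < n := by exact_mod_cast (by omega : h < n)
      linarith
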